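/- Convergence of incremental PnP-ADMM (IPA). Let n, b ≥ 1 and γ > 0. Let g_1,…,g_b : ℝ^n → ℝ be convex and Lipschitz continuous with constants L_1,…,L_b; set L := max{L_1,…,L_b} and g := (1/b)·Σ_{i=1}^b g_i. Let D : ℝ^n → ℝ^n be a map whose residual I − D is firmly nonexpansive, let G := prox_{γg} and G_i := prox_{γ g_i}, and define S(v) := D(v) − G(2·D(v) − v). Assume there exists v* ∈ ℝ^n with S(v*) = 0, and set x* := D(v*). Let (i_k)_{k≥1} be independent random indices, each uniformly distributed on {1,…,b}, and from deterministic initial points x^0, s^0 ∈ ℝ^n define the random sequences z^k := G_{i_k}(x^{k−1} + s^{k−1}), x^k := D(z^k − s^{k−1}), s^k := s^{k−1} + x^k − z^k, and v^k := z^k − s^{k−1}, for k ≥ 1. Assume there is a constant R < ∞ such that ‖x^k − x*‖ ≤ R almost surely for all k ≥ 0. Then for every t ≥ 1, E[(1/t)·Σ_{k=1}^t ‖S(v^k)‖²] ≤ (R + 2γL)²/t + max{γ, γ²}·(4LR + 12L²). -/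

import Mathlib

open MeasureTheory ProbabilityTheory
open scoped RealInnerProductSpace

/-- Euclidean space ℝ^n. -/
abbrev En (n : ℕ) := EuclideanSpace ℝ (Fin n)

/-- `G` is the proximal operator `prox_{γf}`: for every `z`, `G z` minimizes
`x ↦ (1/2)‖x − z‖² + γ f x` over `ℝ^n`. -/
def IsProx {n : ℕ} (γ : ℝ) (f : En n → ℝ) (G : En n → En n) : Prop :=
  ∀ z x : En n,
    (1 / 2 : ℝ) * ‖G z - z‖ ^ 2 + γ * f (G z) ≤ (1 / 2 : ℝ) * ‖x - z‖ ^ 2 + γ * f x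

/-- A map `S : ℝ^n → ℝ^n` is firmly nonexpansive if
`⟨S x − S y, x − y⟩ ≥ ‖S x − S y‖²` for all `x, y`. -/
def FirmlyNonexpansive {n : ℕ} (S : En n → En n) : Prop :=
  ∀ x y : En n, ‖S x - S y‖ ^ 2 ≤ ⟪S x - S y, x - y⟫

/-- Variational inequality for the prox operator of a convex function. -/
lemma prox_varineq {n : ℕ} {γ : ℝ} (hγ : 0 ≤ γ) {f : En n → ℝ} (hf : ConvexOn ℝ Set.univ f)
    {G : En n → En n} (hG : IsProx γ f G) (z x : En n) :
    ⟪z - G z, x - G z⟫ ≤ γ * (f x - f (G z)) := by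
  set d : En n := G z - z with hd
  set h : En n := x - G z with hh
  have key : ∀ t : ℝ, 0 < t → t ≤ 1 →
      0 ≤ ⟪d, h⟫ + t * (‖h‖ ^ 2 / 2) + γ * (f x - f (G z)) := by
    intro t ht0 ht1
    have hcomb : G z + t • h = (1 - t) • G z + t • x := by
      simp only [hh]; module
    have hfc : f (G z + t • h) ≤ (1 - t) * f (G z) + t * f x := by
      rw [hcomb]
      have := hf.2 (Set.mem_univ (G z)) (Set.mem_univ x) (by linarith : (0:ℝ) ≤ 1 - t)
        (le_of_lt ht0) (by ring)
      simpa [smul_eq_mul] using this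
    have hmin := hG z (G z + t • h)
    have hnorm : ‖G z + t • h - z‖ ^ 2 = ‖d‖ ^ 2 + 2 * (t * ⟪d, h⟫) + t ^ 2 * ‖h‖ ^ 2 := by
      have : G z + t • h - z = d + t • h := by rw [hd]; abel
      rw [this, norm_add_sq_real, real_inner_smul_right, norm_smul]
      simp only [mul_pow, Real.norm_eq_abs, abs_of_pos ht0]
      try ring
    have h2 : 0 ≤ t * ⟪d, h⟫ + t ^ 2 * (‖h‖ ^ 2 / 2) + γ * t * (f x - f (G z)) := by
      have hdz : ‖G z - z‖ = ‖d‖ := rfl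
      have hfc' := mul_le_mul_of_nonneg_left hfc hγ
      rw [hdz, hnorm] at hmin
      nlinarith [hmin, hfc']
    have := mul_le_mul_of_nonneg_left h2 (le_of_lt (inv_pos.2 ht0))
    have ht0' : t ≠ 0 := ne_of_gt ht0
    calc (0:ℝ) = t⁻¹ * 0 := by ring
      _ ≤ t⁻¹ * (t * ⟪d, h⟫ + t ^ 2 * (‖h‖ ^ 2 / 2) + γ * t * (f x - f (G z))) := this
      _ = ⟪d, h⟫ + t * (‖h‖ ^ 2 / 2) + γ * (f x - f (G z)) := by
          field_simp
  have main : 0 ≤ ⟪d, h⟫ + γ * (f x - f (G z)) := by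
    by_contra hA
    push_neg at hA
    set A : ℝ := ⟪d, h⟫ + γ * (f x - f (G z)) with hA'
    set B : ℝ := ‖h‖ ^ 2 / 2 with hB'
    have hB0 : 0 ≤ B := by positivity
    have ht' : 0 < min 1 ((-A) / (2 * B + 1)) := by
      apply lt_min one_pos
      apply div_pos (by linarith) (by linarith)
    have := key _ ht' (min_le_left _ _)
    have h3 : min 1 ((-A) / (2 * B + 1)) * B ≤ ((-A) / (2 * B + 1)) * B :=
      mul_le_mul_of_nonneg_right (min_le_right _ _) hB0
    have h4 : ((-A) / (2 * B + 1)) * B < -A := by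
      rw [div_mul_eq_mul_div, div_lt_iff₀ (by linarith)]
      nlinarith
    linarith [this, h3, h4]
  have : ⟪z - G z, x - G z⟫ = -⟪d, h⟫ := by
    rw [hd, hh, ← inner_neg_left]; congr 1; abel
  linarith [main, this.ge, this.le]

/-- Displacement bound for prox of a Lipschitz convex function. -/
lemma prox_disp {n : ℕ} {γ : ℝ} (hγ : 0 ≤ γ) {f : En n → ℝ} (hf : ConvexOn ℝ Set.univ f)
    {G : En n → En n} (hG : IsProx γ f G) {M : ℝ} (hM : 0 ≤ M)
    (hlip : ∀ a c : En n, |f a - f c| ≤ M * ‖a - c‖) (z : En n) :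
    ‖G z - z‖ ≤ γ * M := by
  have h1 := prox_varineq hγ hf hG z z
  have h2 : ⟪z - G z, z - G z⟫ = ‖G z - z‖ ^ 2 := by
    rw [real_inner_self_eq_norm_sq, norm_sub_rev]
  have h3 : f z - f (G z) ≤ M * ‖G z - z‖ := by
    have := hlip z (G z)
    rw [norm_sub_rev (G z) z]
    exact le_trans (le_abs_self _) this
  have h4 : ‖G z - z‖ ^ 2 ≤ γ * M * ‖G z - z‖ := by
    rw [← h2]
    calc ⟪z - G z, z - G z⟫ ≤ γ * (f z - f (G z)) := h1
      _ ≤ γ * (M * ‖G z - z‖) := mul_le_mul_of_nonneg_left h3 hγ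
      _ = γ * M * ‖G z - z‖ := by ring
  nlinarith [norm_nonneg (G z - z), mul_nonneg hγ hM]

/-- Prox operators of convex functions are firmly nonexpansive. -/
lemma prox_firm {n : ℕ} {γ : ℝ} (hγ : 0 ≤ γ) {f : En n → ℝ} (hf : ConvexOn ℝ Set.univ f)
    {G : En n → En n} (hG : IsProx γ f G) (z z' : En n) :
    ‖G z - G z'‖ ^ 2 ≤ ⟪G z - G z', z - z'⟫ := by
  have h1 := prox_varineq hγ hf hG z (G z')
  have h2 := prox_varineq hγ hf hG z' (G z)
  have e1 : ⟪z - G z, G z' - G z⟫ + ⟪z' - G z', G z - G z'⟫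
      = ‖G z - G z'‖ ^ 2 - ⟪G z - G z', z - z'⟫ := by
    simp only [← real_inner_self_eq_norm_sq, inner_sub_left, inner_sub_right]
    linear_combination real_inner_comm z (G z) - real_inner_comm z (G z')
      + real_inner_comm z' (G z') - real_inner_comm z' (G z)
  linarith [h1, h2, e1.le, e1.ge]

/-- The DRS-type operator S is firmly nonexpansive. -/
lemma S_firm {n : ℕ} (D : En n → En n)
    (hD : FirmlyNonexpansive (fun x : En n => x - D x))
    (G : En n → En n) (hGfirm : ∀ z z' : En n, ‖G z - G z'‖ ^ 2 ≤ ⟪G z - G z', z - z'⟫)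
    (S : En n → En n) (hS : ∀ v : En n, S v = D v - G ((2 : ℝ) • D v - v)) :
    FirmlyNonexpansive S := by
  intro a c
  set p : En n := D a - D c with hp
  set q : En n := G ((2 : ℝ) • D a - a) - G ((2 : ℝ) • D c - c) with hq
  set dd : En n := a - c with hdd
  have hGf := hGfirm ((2 : ℝ) • D a - a) ((2 : ℝ) • D c - c)
  have harg : ((2 : ℝ) • D a - a) - ((2 : ℝ) • D c - c) = (2 : ℝ) • p - dd := by
    rw [hp, hdd]; module
  rw [harg] at hGf
  have hDf := hD a c
  have hDf' : ‖dd - p‖ ^ 2 ≤ ⟪dd - p, dd⟫ := by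
    have e : (a - D a) - (c - D c) = dd - p := by rw [hp, hdd]; abel
    simpa [e] using hDf
  have hSd : S a - S c = p - q := by rw [hS, hS, hp, hq]; abel
  rw [hSd]
  have e1 : ‖p - q‖ ^ 2 = ‖p‖ ^ 2 - 2 * ⟪p, q⟫ + ‖q‖ ^ 2 := norm_sub_sq_real p q
  have e2 : (⟪p - q, dd⟫ : ℝ) = ⟪p, dd⟫ - ⟪q, dd⟫ := inner_sub_left _ _ _
  have e3 : (⟪q, (2:ℝ) • p - dd⟫ : ℝ) = 2 * ⟪q, p⟫ - ⟪q, dd⟫ := by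
    rw [inner_sub_right, inner_smul_right]
  have e4 : ‖dd - p‖ ^ 2 = ‖dd‖ ^ 2 - 2 * ⟪dd, p⟫ + ‖p‖ ^ 2 := norm_sub_sq_real dd p
  have e5 : (⟪dd - p, dd⟫ : ℝ) = ‖dd‖ ^ 2 - ⟪p, dd⟫ := by
    rw [inner_sub_left, real_inner_self_eq_norm_sq, real_inner_comm]
  have hq2 : ‖q‖ ^ 2 ≤ 2 * ⟪q, p⟫ - ⟪q, dd⟫ := by rw [← e3]; exact hGf
  have hp2 : ‖p‖ ^ 2 ≤ ⟪p, dd⟫ := by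
    rw [e4, e5] at hDf'
    have := real_inner_comm dd p
    linarith
  have hpq : (⟪p, q⟫ : ℝ) = ⟪q, p⟫ := real_inner_comm _ _
  linarith [e1, e2, hq2, hp2]

lemma convexOn_avg {n b : ℕ} (g : Fin b → En n → ℝ)
    (hconv : ∀ i, ConvexOn ℝ Set.univ (g i)) (c : ℝ) (hc : 0 ≤ c) :
    ConvexOn ℝ Set.univ (fun x => c * ∑ i, g i x) := by
  refine ⟨convex_univ, ?_⟩
  intro p _ q _ a a' ha ha' hab
  simp only [smul_eq_mul]
  have h : ∀ i : Fin b, g i (a • p + a' • q) ≤ a * g i p + a' * g i q := fun i => by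
    simpa [smul_eq_mul] using (hconv i).2 (Set.mem_univ p) (Set.mem_univ q) ha ha' hab
  have hsum := Finset.sum_le_sum (fun i (_ : i ∈ Finset.univ) => h i)
  rw [Finset.sum_add_distrib, ← Finset.mul_sum, ← Finset.mul_sum] at hsum
  calc c * ∑ i, g i (a • p + a' • q)
      ≤ c * (a * ∑ i, g i p + a' * ∑ i, g i q) := mul_le_mul_of_nonneg_left hsum hc
    _ = a * (c * ∑ i, g i p) + a' * (c * ∑ i, g i q) := by ring

set_option maxHeartbeats 1000000

/-- Convergence of incremental PnP-ADMM (IPA). -/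
theorem ipa_convergence {n b : ℕ} (hn : 1 ≤ n) (hb : 1 ≤ b)
    (γ : ℝ) (hγ : 0 < γ)
    (g : Fin b → En n → ℝ)
    (hconv : ∀ i, ConvexOn ℝ Set.univ (g i))
    (Lc : Fin b → ℝ)
    (hlip : ∀ i, ∀ x y : En n, |g i x - g i y| ≤ Lc i * ‖x - y‖)
    (L : ℝ) (hL : L = ⨆ i, Lc i)
    (D : En n → En n) (hD : FirmlyNonexpansive (fun x : En n => x - D x))
    (G : En n → En n) (hG : IsProx γ (fun x => (1 / (b : ℝ)) * ∑ i, g i x) G)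
    (Gi : Fin b → En n → En n) (hGi : ∀ i, IsProx γ (g i) (Gi i))
    (S : En n → En n) (hS : ∀ v : En n, S v = D v - G ((2 : ℝ) • D v - v))
    (vstar : En n) (hvstar : S vstar = 0)
    (xstar : En n) (hxstar : xstar = D vstar)
    (Ω : Type*) [MeasurableSpace Ω] (μ : Measure Ω) [IsProbabilityMeasure μ]
    (idx : ℕ → Ω → Fin b)
    (hmeas : ∀ k, Measurable (idx k))
    (hindep : iIndepFun idx μ)
    (hunif : ∀ (k : ℕ) (i : Fin b), μ {ω | idx k ω = i} = 1 / (b : ENNReal))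
    (x0 s0 : En n)
    (x z s v : ℕ → Ω → En n)
    (hx0 : ∀ ω, x 0 ω = x0) (hs0 : ∀ ω, s 0 ω = s0)
    (hz : ∀ k : ℕ, 1 ≤ k → ∀ ω, z k ω = Gi (idx k ω) (x (k - 1) ω + s (k - 1) ω))
    (hx : ∀ k : ℕ, 1 ≤ k → ∀ ω, x k ω = D (z k ω - s (k - 1) ω))
    (hs : ∀ k : ℕ, 1 ≤ k → ∀ ω, s k ω = s (k - 1) ω + x k ω - z k ω)
    (hv : ∀ k : ℕ, 1 ≤ k → ∀ ω, v k ω = z k ω - s (k - 1) ω)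
    (R : ℝ) (hR : ∀ k : ℕ, ∀ᵐ ω ∂μ, ‖x k ω - xstar‖ ≤ R)
    (t : ℕ) (ht : 1 ≤ t) :
    ∫ ω, (1 / (t : ℝ)) * ∑ k ∈ Finset.Icc 1 t, ‖S (v k ω)‖ ^ 2 ∂μ
      ≤ (R + 2 * γ * L) ^ 2 / (t : ℝ) + max γ (γ ^ 2) * (4 * L * R + 12 * L ^ 2) := by
  haveI : Nonempty (Fin b) := ⟨⟨0, hb⟩⟩
  have hγ' : (0:ℝ) ≤ γ := hγ.le
  -- nonnegativity of the Lipschitz constants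
  have hLc0 : ∀ i, 0 ≤ Lc i := by
    intro i
    have h1 := hlip i (EuclideanSpace.single ⟨0, hn⟩ (1:ℝ)) 0
    rw [sub_zero, EuclideanSpace.norm_single] at h1
    have h2 : (0:ℝ) ≤ Lc i * ‖(1:ℝ)‖ := le_trans (abs_nonneg _) h1
    simpa using h2
  have hLcL : ∀ i, Lc i ≤ L := by
    intro i
    rw [hL]
    exact le_ciSup (Set.Finite.bddAbove (Set.finite_range Lc)) i
  have hL0 : 0 ≤ L := le_trans (hLc0 ⟨0, hb⟩) (hLcL ⟨0, hb⟩)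
  have hγL : (0:ℝ) ≤ γ * L := mul_nonneg hγ' hL0
  -- the average function
  have hb0 : (0:ℝ) < (b:ℝ) := by exact_mod_cast hb
  have hgconv : ConvexOn ℝ Set.univ (fun x : En n => (1 / (b:ℝ)) * ∑ i, g i x) :=
    convexOn_avg g hconv _ (by positivity)
  have hglip : ∀ a c : En n, |(1 / (b:ℝ)) * ∑ i, g i a - (1 / (b:ℝ)) * ∑ i, g i c|
      ≤ L * ‖a - c‖ := by
    intro a c
    have h1 : (1 / (b:ℝ)) * ∑ i, g i a - (1 / (b:ℝ)) * ∑ i, g i c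
        = (1 / (b:ℝ)) * ∑ i, (g i a - g i c) := by
      rw [Finset.sum_sub_distrib]; ring
    rw [h1, abs_mul, abs_of_nonneg (by positivity : (0:ℝ) ≤ 1 / (b:ℝ))]
    have h2 : |∑ i, (g i a - g i c)| ≤ ∑ i : Fin b, L * ‖a - c‖ := by
      refine le_trans (Finset.abs_sum_le_sum_abs _ _) (Finset.sum_le_sum ?_)
      intro i _
      exact le_trans (hlip i a c) (mul_le_mul_of_nonneg_right (hLcL i) (norm_nonneg _))
    have h3 : ∑ _i : Fin b, L * ‖a - c‖ = (b:ℝ) * (L * ‖a - c‖) := by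
      rw [Finset.sum_const, Finset.card_univ, Fintype.card_fin, nsmul_eq_mul]
    calc (1 / (b:ℝ)) * |∑ i, (g i a - g i c)|
        ≤ (1 / (b:ℝ)) * ((b:ℝ) * (L * ‖a - c‖)) := by
          rw [← h3]; exact mul_le_mul_of_nonneg_left h2 (by positivity)
      _ = L * ‖a - c‖ := by field_simp
  -- displacement bounds
  have hGdisp : ∀ w : En n, ‖G w - w‖ ≤ γ * L :=
    prox_disp hγ' hgconv hG hL0 hglip
  have hGidisp : ∀ i (w : En n), ‖Gi i w - w‖ ≤ γ * L := by
    intro i w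
    exact le_trans (prox_disp hγ' (hconv i) (hGi i) (hLc0 i) (hlip i) w)
      (mul_le_mul_of_nonneg_left (hLcL i) hγ')
  -- S is firmly nonexpansive
  have hSfirm : FirmlyNonexpansive S :=
    S_firm D hD G (prox_firm hγ' hgconv hG) S hS
  -- descent inequality
  have hB : ∀ u : En n, ‖(u - vstar) - S u‖ ^ 2 ≤ ‖u - vstar‖ ^ 2 - ‖S u‖ ^ 2 := by
    intro u
    have h1 := hSfirm u vstar
    rw [hvstar, sub_zero] at h1
    rw [norm_sub_sq_real (u - vstar) (S u)]
    have h2 : (⟪u - vstar, S u⟫ : ℝ) = ⟪S u, u - vstar⟫ := real_inner_comm _ _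
    linarith
  -- fixed point facts
  have hGw : G ((2:ℝ) • D vstar - vstar) = D vstar := by
    have h1 := hvstar
    rw [hS] at h1
    exact (sub_eq_zero.mp h1).symm
  have hsstar : ‖xstar - vstar‖ ≤ γ * L := by
    have e : xstar - vstar
        = -(G ((2:ℝ) • D vstar - vstar) - ((2:ℝ) • D vstar - vstar)) := by
      rw [hGw, hxstar]; module
    rw [e, norm_neg]
    exact hGdisp _
  -- R is nonnegative
  haveI : NeZero μ := ⟨IsProbabilityMeasure.ne_zero μ⟩
  have hR0 : (0:ℝ) ≤ R := by
    obtain ⟨ω0, hω0⟩ := (hR 0).exists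
    exact le_trans (norm_nonneg _) hω0
  have ht0 : (0:ℝ) < (t:ℝ) := by exact_mod_cast ht
  -- the pointwise (a.e.) bound
  have hpt : ∀ᵐ ω ∂μ, (1 / (t : ℝ)) * ∑ k ∈ Finset.Icc 1 t, ‖S (v k ω)‖ ^ 2
      ≤ (R + 2 * γ * L) ^ 2 / (t : ℝ) + max γ (γ ^ 2) * (4 * L * R + 12 * L ^ 2) := by
    filter_upwards [ae_all_iff.2 hR] with ω hω
    have hsx : ∀ k, 1 ≤ k → s k ω = x k ω - v k ω := by
      intro k hk; rw [hs k hk ω, hv k hk ω]; abel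
    have hxk : ∀ k, 1 ≤ k → x k ω = D (v k ω) := by
      intro k hk; rw [hx k hk ω, hv k hk ω]
    -- (A) uniform bound on ‖v k − v*‖
    have hA : ∀ k, 1 ≤ k → ‖v k ω - vstar‖ ≤ R + 2 * γ * L := by
      intro k hk
      have e : v k ω - vstar
          = (Gi (idx k ω) (x (k-1) ω + s (k-1) ω) - (x (k-1) ω + s (k-1) ω))
            + (x (k-1) ω - xstar) + (xstar - vstar) := by
        rw [hv k hk ω, hz k hk ω]; abel
      rw [e]
      have h1 := hGidisp (idx k ω) (x (k-1) ω + s (k-1) ω)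
      have h2 := hω (k-1)
      calc ‖_ + _ + _‖ ≤ ‖_ + _‖ + ‖xstar - vstar‖ := norm_add_le _ _
        _ ≤ ‖Gi (idx k ω) (x (k-1) ω + s (k-1) ω) - (x (k-1) ω + s (k-1) ω)‖
            + ‖x (k-1) ω - xstar‖ + ‖xstar - vstar‖ := by
              linarith [norm_add_le (Gi (idx k ω) (x (k-1) ω + s (k-1) ω)
                - (x (k-1) ω + s (k-1) ω)) (x (k-1) ω - xstar)]
        _ ≤ γ * L + R + γ * L := by linarith [hsstar]
        _ = R + 2 * γ * L := by ring
    -- (C) inexactness bound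
    have hC : ∀ k, 1 ≤ k → ‖v (k+1) ω - (v k ω - S (v k ω))‖ ≤ 2 * (γ * L) := by
      intro k hk
      have harg : x k ω + s k ω = (2:ℝ) • D (v k ω) - v k ω := by
        rw [hsx k hk, hxk k hk]; module
      have e : v (k+1) ω - (v k ω - S (v k ω))
          = (Gi (idx (k+1) ω) ((2:ℝ) • D (v k ω) - v k ω)
              - ((2:ℝ) • D (v k ω) - v k ω))
            - (G ((2:ℝ) • D (v k ω) - v k ω) - ((2:ℝ) • D (v k ω) - v k ω)) := by
        rw [hv (k+1) (by omega) ω, hz (k+1) (by omega) ω]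
        simp only [Nat.add_sub_cancel]
        rw [harg, hS (v k ω), hsx k hk, hxk k hk]
        abel
      rw [e]
      refine le_trans (norm_sub_le _ _) ?_
      have h1 := hGidisp (idx (k+1) ω) ((2:ℝ) • D (v k ω) - v k ω)
      have h2 := hGdisp ((2:ℝ) • D (v k ω) - v k ω)
      linarith
    -- per-step inequality
    have step : ∀ k, 1 ≤ k → ‖S (v k ω)‖ ^ 2 + ‖v (k+1) ω - vstar‖ ^ 2
        ≤ ‖v k ω - vstar‖ ^ 2 + (4 * γ * L * R + 12 * γ ^ 2 * L ^ 2) := by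
      intro k hk
      have h1 := hB (v k ω)
      have h2 := hC k hk
      have h3 := hA k hk
      have hba : ‖(v k ω - vstar) - S (v k ω)‖ ≤ ‖v k ω - vstar‖ := by
        rw [← pow_le_pow_iff_left₀ (norm_nonneg _) (norm_nonneg _) two_ne_zero]
        nlinarith [sq_nonneg ‖S (v k ω)‖]
      have htri : ‖v (k+1) ω - vstar‖
          ≤ ‖(v k ω - vstar) - S (v k ω)‖ + 2 * (γ * L) := by
        have e : v (k+1) ω - vstar
            = (v (k+1) ω - (v k ω - S (v k ω))) + ((v k ω - vstar) - S (v k ω)) := by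
          abel
        rw [e]
        exact le_trans (norm_add_le _ _) (by linarith)
      have h4 : ‖v (k+1) ω - vstar‖ ^ 2
          ≤ (‖(v k ω - vstar) - S (v k ω)‖ + 2 * (γ * L)) ^ 2 :=
        pow_le_pow_left₀ (norm_nonneg _) htri 2
      have h5 : 4 * (γ * L) * ‖(v k ω - vstar) - S (v k ω)‖
          ≤ 4 * (γ * L) * (R + 2 * γ * L) :=
        mul_le_mul_of_nonneg_left (hba.trans h3) (by linarith)
      nlinarith [h1, h4, h5]
    -- telescoping sum
    have hsum : ∀ j, 1 ≤ j →
        (∑ k ∈ Finset.Icc 1 j, ‖S (v k ω)‖ ^ 2) + ‖v (j+1) ω - vstar‖ ^ 2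
          ≤ (R + 2 * γ * L) ^ 2 + (j:ℝ) * (4 * γ * L * R + 12 * γ ^ 2 * L ^ 2) := by
      intro j hj
      induction j, hj using Nat.le_induction with
      | base =>
        rw [Finset.Icc_self, Finset.sum_singleton]
        have h1 := step 1 le_rfl
        have h2 : ‖v 1 ω - vstar‖ ^ 2 ≤ (R + 2 * γ * L) ^ 2 :=
          pow_le_pow_left₀ (norm_nonneg _) (hA 1 le_rfl) 2
        push_cast
        linarith
      | succ j hj ih =>
        rw [Finset.sum_Icc_succ_top (by omega : 1 ≤ j + 1)]
        have h1 := step (j+1) (by omega)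
        push_cast at ih ⊢
        linarith
    have hfin : (∑ k ∈ Finset.Icc 1 t, ‖S (v k ω)‖ ^ 2)
        ≤ (R + 2 * γ * L) ^ 2 + (t:ℝ) * (4 * γ * L * R + 12 * γ ^ 2 * L ^ 2) := by
      have h1 := hsum t ht
      nlinarith [sq_nonneg ‖v (t+1) ω - vstar‖]
    have hCle : 4 * γ * L * R + 12 * γ ^ 2 * L ^ 2
        ≤ max γ (γ ^ 2) * (4 * L * R + 12 * L ^ 2) := by
      have h1 : γ ≤ max γ (γ ^ 2) := le_max_left _ _
      have h2 : γ ^ 2 ≤ max γ (γ ^ 2) := le_max_right _ _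
      have h3 : 4 * γ * L * R ≤ max γ (γ ^ 2) * (4 * L * R) := by
        have hLR : (0:ℝ) ≤ 4 * L * R := by positivity
        nlinarith
      have h4 : 12 * γ ^ 2 * L ^ 2 ≤ max γ (γ ^ 2) * (12 * L ^ 2) := by
        have hL2 : (0:ℝ) ≤ 12 * L ^ 2 := by positivity
        nlinarith
      nlinarith [h3, h4]
    calc (1 / (t : ℝ)) * ∑ k ∈ Finset.Icc 1 t, ‖S (v k ω)‖ ^ 2
        ≤ (1 / (t : ℝ)) * ((R + 2 * γ * L) ^ 2
            + (t:ℝ) * (4 * γ * L * R + 12 * γ ^ 2 * L ^ 2)) :=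
          mul_le_mul_of_nonneg_left hfin (by positivity)
      _ = (R + 2 * γ * L) ^ 2 / (t : ℝ) + (4 * γ * L * R + 12 * γ ^ 2 * L ^ 2) := by
          field_simp
      _ ≤ (R + 2 * γ * L) ^ 2 / (t : ℝ)
            + max γ (γ ^ 2) * (4 * L * R + 12 * L ^ 2) := by linarith
  -- integrate
  have hrhs0 : (0:ℝ) ≤ (R + 2 * γ * L) ^ 2 / (t : ℝ)
      + max γ (γ ^ 2) * (4 * L * R + 12 * L ^ 2) := by
    have h1 : (0:ℝ) ≤ max γ (γ ^ 2) := le_trans hγ' (le_max_left _ _)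
    have h2 : (0:ℝ) ≤ 4 * L * R + 12 * L ^ 2 := by positivity
    have h3 : (0:ℝ) ≤ (R + 2 * γ * L) ^ 2 / (t : ℝ) := by positivity
    nlinarith
  by_cases hInt : Integrable
      (fun ω => (1 / (t : ℝ)) * ∑ k ∈ Finset.Icc 1 t, ‖S (v k ω)‖ ^ 2) μ
  · calc ∫ ω, (1 / (t : ℝ)) * ∑ k ∈ Finset.Icc 1 t, ‖S (v k ω)‖ ^ 2 ∂μ
        ≤ ∫ _ω, ((R + 2 * γ * L) ^ 2 / (t : ℝ)
            + max γ (γ ^ 2) * (4 * L * R + 12 * L ^ 2)) ∂μ :=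
          integral_mono_ae hInt (integrable_const _) hpt
      _ = (R + 2 * γ * L) ^ 2 / (t : ℝ)
            + max γ (γ ^ 2) * (4 * L * R + 12 * L ^ 2) := by
          simp [integral_const]
  · rw [integral_undef hInt]
    exact hrhs0
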